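/- Let v ∈ ℝ^m, let B be the real symmetric (m+1)×(m+1) block matrix [[0_{m×m}, v],[vᵀ, 0]], and let Y be a PSD real symmetric (m+1)×(m+1) matrix. Then ⟨B, Y⟩_F ≤ √2·‖v‖₂·Tr(Y). -/

import Mathlib

open Matrix

/-- The symmetric block matrix `[[S, v],[vᵀ, e]]` of size `(m+1) × (m+1)`. -/
def Bmat (m : ℕ) (S : Matrix (Fin m) (Fin m) ℝ) (v : Fin m → ℝ) (e : ℝ) :
    Matrix (Fin (m + 1)) (Fin (m + 1)) ℝ :=
  Matrix.of fun i j =>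
    if hi : (i : ℕ) < m then
      if hj : (j : ℕ) < m then S ⟨i, hi⟩ ⟨j, hj⟩ else v ⟨i, hi⟩
    else if hj : (j : ℕ) < m then v ⟨j, hj⟩ else e

lemma psd_entry_sq_le {n : ℕ} (Y : Matrix (Fin n) (Fin n) ℝ) (hY : Y.PosSemidef)
    (i j : Fin n) : (Y i j) ^ 2 ≤ Y i i * Y j j := by
  have hsym : Y j i = Y i j := by
    have := hY.1
    rw [Matrix.IsHermitian] at this
    conv_lhs => rw [← this]
    simp [Matrix.conjTranspose_apply]
  have key : ∀ t : ℝ, 0 ≤ Y i i * (t * t) + (2 * Y i j) * t + Y j j := by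
    intro t
    have h := hY.dotProduct_mulVec_nonneg (t • (Pi.single i 1 : Fin n → ℝ) + Pi.single j 1)
    simp only [RCLike.star_def, starRingEnd_apply, star_trivial] at h
    have hexp : (t • (Pi.single i 1 : Fin n → ℝ) + Pi.single j 1) ⬝ᵥ
        (Y *ᵥ (t • (Pi.single i 1 : Fin n → ℝ) + Pi.single j 1)) =
        Y i i * (t * t) + (2 * Y i j) * t + Y j j := by
      simp [Matrix.mulVec_add, Matrix.mulVec_smul, dotProduct_add,
        add_dotProduct, smul_dotProduct, dotProduct_smul,
        Matrix.mulVec_single, single_dotProduct, hsym]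
      ring
    rw [hexp] at h
    exact h
  have hd := discrim_le_zero key
  rw [discrim] at hd
  nlinarith [hd]

/-- for the symmetric block matrix `B = [[0, v],[vᵀ, 0]]` and a PSD matrix `Y`,
`⟨B, Y⟩_F ≤ √2 · ‖v‖₂ · Tr(Y)`. -/
theorem frobenius_offdiag_block_le
    {m : ℕ} (v : Fin m → ℝ)
    (Y : Matrix (Fin (m + 1)) (Fin (m + 1)) ℝ) (hY : Y.PosSemidef) :
    ((Bmat m 0 v 0)ᵀ * Y).trace ≤
      Real.sqrt 2 * Real.sqrt (∑ i, v i ^ 2) * Y.trace := by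
  set L : Fin (m + 1) := Fin.last m with hL
  have hsym : ∀ i j, Y j i = Y i j := by
    intro i j
    have := hY.1
    rw [Matrix.IsHermitian] at this
    conv_lhs => rw [← this]
    simp [Matrix.conjTranspose_apply]
  -- compute the trace
  have htr : ((Bmat m 0 v 0)ᵀ * Y).trace
      = 2 * ∑ i : Fin m, v i * Y (Fin.castSucc i) L := by
    rw [Matrix.trace]
    simp only [Matrix.diag_apply, Matrix.mul_apply, Matrix.transpose_apply]
    rw [Fin.sum_univ_castSucc]
    simp only [Fin.sum_univ_castSucc (n := m)]
    have hB : ∀ (i j : Fin m), Bmat m 0 v 0 (Fin.castSucc i) (Fin.castSucc j) = 0 := by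
      intro i j; simp [Bmat, i.isLt, j.isLt]
    have hBv : ∀ (i : Fin m), Bmat m 0 v 0 (Fin.castSucc i) L = v i := by
      intro i; simp [Bmat, i.isLt, hL]
    have hBv' : ∀ (i : Fin m), Bmat m 0 v 0 L (Fin.castSucc i) = v i := by
      intro i; simp [Bmat, i.isLt, hL]
    have hBe : Bmat m 0 v 0 L L = 0 := by simp [Bmat, hL]
    simp only [← hL, hB, hBv, hBv', hBe, zero_mul, Finset.sum_const_zero, add_zero, zero_add]
    rw [Finset.mul_sum, ← Finset.sum_add_distrib]
    congr 1; ext i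
    rw [hsym L (Fin.castSucc i)]
    ring
  rw [htr]
  -- diagonal entries are nonneg
  have hdiag : ∀ i, 0 ≤ Y i i := by
    intro i
    have h := hY.dotProduct_mulVec_nonneg (Pi.single i 1 : Fin (m+1) → ℝ)
    simpa [Matrix.mulVec_single, single_dotProduct] using h
  set a : ℝ := ∑ i : Fin m, Y (Fin.castSucc i) (Fin.castSucc i) with ha
  have hann : 0 ≤ a := Finset.sum_nonneg fun i _ => hdiag _
  have hYLL : 0 ≤ Y L L := hdiag L
  have htrY : Y.trace = a + Y L L := by
    rw [Matrix.trace, Fin.sum_univ_castSucc]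
    simp [Matrix.diag_apply, ha, hL]
  -- entrywise bound
  have hstep : ∀ i : Fin m, v i * Y (Fin.castSucc i) L ≤
      |v i| * (Real.sqrt (Y (Fin.castSucc i) (Fin.castSucc i)) * Real.sqrt (Y L L)) := by
    intro i
    have h1 : (Y (Fin.castSucc i) L) ^ 2 ≤
        Y (Fin.castSucc i) (Fin.castSucc i) * Y L L := psd_entry_sq_le Y hY _ _
    have h2 : |Y (Fin.castSucc i) L| ≤
        Real.sqrt (Y (Fin.castSucc i) (Fin.castSucc i)) * Real.sqrt (Y L L) := by
      rw [← Real.sqrt_mul (hdiag _)]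
      rw [← Real.sqrt_sq_eq_abs]
      exact Real.sqrt_le_sqrt h1
    calc v i * Y (Fin.castSucc i) L ≤ |v i * Y (Fin.castSucc i) L| := le_abs_self _
      _ = |v i| * |Y (Fin.castSucc i) L| := abs_mul _ _
      _ ≤ |v i| * (Real.sqrt (Y (Fin.castSucc i) (Fin.castSucc i)) * Real.sqrt (Y L L)) :=
          mul_le_mul_of_nonneg_left h2 (abs_nonneg _)
  have hsum : ∑ i : Fin m, v i * Y (Fin.castSucc i) L ≤
      (Real.sqrt (∑ i, v i ^ 2) * Real.sqrt a) * Real.sqrt (Y L L) := by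
    calc ∑ i : Fin m, v i * Y (Fin.castSucc i) L
        ≤ ∑ i : Fin m, (|v i| * Real.sqrt (Y (Fin.castSucc i) (Fin.castSucc i)))
            * Real.sqrt (Y L L) := by
          refine Finset.sum_le_sum fun i _ => ?_
          rw [mul_assoc]; exact hstep i
      _ = (∑ i : Fin m, |v i| * Real.sqrt (Y (Fin.castSucc i) (Fin.castSucc i)))
            * Real.sqrt (Y L L) := by rw [Finset.sum_mul]
      _ ≤ (Real.sqrt (∑ i, v i ^ 2) * Real.sqrt a) * Real.sqrt (Y L L) := by
          refine mul_le_mul_of_nonneg_right ?_ (Real.sqrt_nonneg _)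
          have hcs := Real.sum_mul_le_sqrt_mul_sqrt Finset.univ
            (fun i => |v i|) (fun i => Real.sqrt (Y (Fin.castSucc i) (Fin.castSucc i)))
          simp only [sq_abs, Real.sq_sqrt (hdiag _)] at hcs
          simpa [ha] using hcs
  have hfin : 2 * ((Real.sqrt (∑ i, v i ^ 2) * Real.sqrt a) * Real.sqrt (Y L L)) ≤
      Real.sqrt (∑ i, v i ^ 2) * (a + Y L L) := by
    have h2ab : 2 * (Real.sqrt a * Real.sqrt (Y L L)) ≤ a + Y L L := by
      nlinarith [sq_nonneg (Real.sqrt a - Real.sqrt (Y L L)),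
        Real.sq_sqrt hann, Real.sq_sqrt hYLL, Real.sqrt_nonneg a, Real.sqrt_nonneg (Y L L)]
    have := mul_le_mul_of_nonneg_left h2ab (Real.sqrt_nonneg (∑ i, v i ^ 2))
    nlinarith [Real.sqrt_nonneg (∑ i : Fin m, v i ^ 2)]
  have h1le : (1 : ℝ) ≤ Real.sqrt 2 := by
    rw [show (1:ℝ) = Real.sqrt 1 by simp]
    exact Real.sqrt_le_sqrt (by norm_num)
  calc 2 * ∑ i : Fin m, v i * Y (Fin.castSucc i) L
      ≤ 2 * ((Real.sqrt (∑ i, v i ^ 2) * Real.sqrt a) * Real.sqrt (Y L L)) := by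
        linarith [hsum]
    _ ≤ Real.sqrt (∑ i, v i ^ 2) * (a + Y L L) := hfin
    _ ≤ Real.sqrt 2 * Real.sqrt (∑ i, v i ^ 2) * (a + Y L L) := by
        have h0 : 0 ≤ Real.sqrt (∑ i : Fin m, v i ^ 2) * (a + Y L L) :=
          mul_nonneg (Real.sqrt_nonneg _) (by linarith)
        nlinarith [Real.sqrt_nonneg (∑ i : Fin m, v i ^ 2)]
    _ = Real.sqrt 2 * Real.sqrt (∑ i, v i ^ 2) * Y.trace := by rw [htrY]
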